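/- Let f_O : (Z/2)^n × (Z/2)^n → Z/2 be defined by f_O(x,y) = Σ_{i<j<k} (x_i x_j y_k + x_i y_j x_k + y_i x_j x_k) + Σ_{i≤j} x_i y_j. Then the function α(x) := f_O(x,x) equals Σ_{i<j<k} x_i x_j x_k + Σ_{i<j} x_i x_j + Σ_i x_i, and moreover f_O(x,y) + f_O(y,x) = α(x+y) + α(x) + α(y) for all x,y. -/
import Mathlib


lemma le_split (n : ℕ) (g : Fin n → Fin n → ZMod 2) :
    ∑ t ∈ Finset.univ.filter (fun t : Fin n × Fin n => t.1 ≤ t.2), g t.1 t.2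
      = (∑ t ∈ Finset.univ.filter (fun t : Fin n × Fin n => t.1 < t.2), g t.1 t.2)
        + ∑ i, g i i := by
  rw [← Finset.sum_filter_add_sum_filter_not
      (Finset.univ.filter (fun t : Fin n × Fin n => t.1 ≤ t.2))
      (fun t => t.1 < t.2)]
  congr 1
  · apply Finset.sum_congr _ (fun _ _ => rfl)
    rw [Finset.filter_filter]
    apply Finset.filter_congr
    intro t _
    exact ⟨And.right, fun h => ⟨le_of_lt h, h⟩⟩
  · have key : ∀ a : Fin n × Fin n,
        a ∈ (Finset.univ.filter (fun t : Fin n × Fin n => t.1 ≤ t.2)).filter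
          (fun t => ¬ t.1 < t.2) → a.2 = a.1 := by
      intro a ha
      simp only [Finset.mem_filter, Finset.mem_univ, true_and, not_lt] at ha
      exact le_antisymm ha.2 ha.1
    apply Finset.sum_nbij' (fun t : Fin n × Fin n => t.1) (fun i => (i, i))
    · intro a _; exact Finset.mem_univ _
    · intro a _; simp
    · intro a ha; exact Prod.ext rfl (key a ha).symm
    · intro a _; rfl
    · intro a ha; rw [key a ha]

/-- The twisting function `f_O` of the algebra `O_n`:
`f_O(x,y) = Σ_{i<j<k}(x_i x_j y_k + x_i y_j x_k + y_i x_j x_k) + Σ_{i≤j} x_i y_j`. -/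
def twistO (n : ℕ) (x y : Fin n → ZMod 2) : ZMod 2 :=
  (∑ t ∈ Finset.univ.filter
      (fun t : Fin n × Fin n × Fin n => t.1 < t.2.1 ∧ t.2.1 < t.2.2),
      (x t.1 * x t.2.1 * y t.2.2 + x t.1 * y t.2.1 * x t.2.2
        + y t.1 * x t.2.1 * x t.2.2))
  + ∑ t ∈ Finset.univ.filter (fun t : Fin n × Fin n => t.1 ≤ t.2),
      x t.1 * y t.2

/-- The cubic form `α_n(x) = Σ_{i<j<k} x_i x_j x_k + Σ_{i<j} x_i x_j + Σ_i x_i`. -/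
def cubicFormOn (n : ℕ) (x : Fin n → ZMod 2) : ZMod 2 :=
  (∑ t ∈ Finset.univ.filter
      (fun t : Fin n × Fin n × Fin n => t.1 < t.2.1 ∧ t.2.1 < t.2.2),
      x t.1 * x t.2.1 * x t.2.2)
  + (∑ t ∈ Finset.univ.filter (fun t : Fin n × Fin n => t.1 < t.2),
      x t.1 * x t.2)
  + ∑ i, x i

/-- `f_O(x,x) = α_n(x)`, and
`f_O(x,y) + f_O(y,x) = α_n(x+y) + α_n(x) + α_n(y)`: the cubic form `α_n`
satisfies conditions (i) and (ii) of a generating function for `f_O`. -/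
theorem stmt_11 (n : ℕ) :
    (∀ x : Fin n → ZMod 2, twistO n x x = cubicFormOn n x) ∧
    (∀ x y : Fin n → ZMod 2,
      twistO n x y + twistO n y x
        = cubicFormOn n (x + y) + cubicFormOn n x + cubicFormOn n y) := by
  constructor
  · intro x
    unfold twistO cubicFormOn
    rw [le_split n (fun i j => x i * x j)]
    have h1 : ∀ t ∈ Finset.univ.filter
        (fun t : Fin n × Fin n × Fin n => t.1 < t.2.1 ∧ t.2.1 < t.2.2),
        x t.1 * x t.2.1 * x t.2.2 + x t.1 * x t.2.1 * x t.2.2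
          + x t.1 * x t.2.1 * x t.2.2 = x t.1 * x t.2.1 * x t.2.2 :=
      fun t _ => by have : ∀ a : ZMod 2, a + a + a = a := by decide
                    exact this _
    have h2 : ∀ i ∈ (Finset.univ : Finset (Fin n)), x i * x i = x i :=
      fun i _ => by have : ∀ a : ZMod 2, a * a = a := by decide
                    exact this _
    rw [Finset.sum_congr rfl h1, Finset.sum_congr rfl h2]
    ring
  · intro x y
    unfold twistO cubicFormOn
    rw [le_split n (fun i j => x i * y j), le_split n (fun i j => y i * x j)]
    simp only [Pi.add_apply]
    have key3 : ∀ a b c d e f : ZMod 2,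
        (a * b * f + a * e * c + d * b * c) + (d * e * c + d * b * f + a * e * f)
          = (a + d) * (b + e) * (c + f) + a * b * c + d * e * f := by decide
    have key2 : ∀ a b c d : ZMod 2,
        a * d + c * b = (a + c) * (b + d) + a * b + c * d := by decide
    have key1 : ∀ a b : ZMod 2, a * b + b * a = (a + b) + a + b := by decide
    calc
      (∑ t ∈ Finset.univ.filter
            (fun t : Fin n × Fin n × Fin n => t.1 < t.2.1 ∧ t.2.1 < t.2.2),
            (x t.1 * x t.2.1 * y t.2.2 + x t.1 * y t.2.1 * x t.2.2
              + y t.1 * x t.2.1 * x t.2.2))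
          + ((∑ t ∈ Finset.univ.filter (fun t : Fin n × Fin n => t.1 < t.2),
              x t.1 * y t.2) + ∑ i, x i * y i)
        + ((∑ t ∈ Finset.univ.filter
            (fun t : Fin n × Fin n × Fin n => t.1 < t.2.1 ∧ t.2.1 < t.2.2),
            (y t.1 * y t.2.1 * x t.2.2 + y t.1 * x t.2.1 * y t.2.2
              + x t.1 * y t.2.1 * y t.2.2))
          + ((∑ t ∈ Finset.univ.filter (fun t : Fin n × Fin n => t.1 < t.2),
              y t.1 * x t.2) + ∑ i, y i * x i))
        = (∑ t ∈ Finset.univ.filter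
            (fun t : Fin n × Fin n × Fin n => t.1 < t.2.1 ∧ t.2.1 < t.2.2),
            ((x t.1 * x t.2.1 * y t.2.2 + x t.1 * y t.2.1 * x t.2.2
              + y t.1 * x t.2.1 * x t.2.2)
             + (y t.1 * y t.2.1 * x t.2.2 + y t.1 * x t.2.1 * y t.2.2
              + x t.1 * y t.2.1 * y t.2.2)))
          + ((∑ t ∈ Finset.univ.filter (fun t : Fin n × Fin n => t.1 < t.2),
              (x t.1 * y t.2 + y t.1 * x t.2))
             + ∑ i, (x i * y i + y i * x i)) := by
            simp only [Finset.sum_add_distrib]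
            ring
      _ = (∑ t ∈ Finset.univ.filter
            (fun t : Fin n × Fin n × Fin n => t.1 < t.2.1 ∧ t.2.1 < t.2.2),
            ((x t.1 + y t.1) * (x t.2.1 + y t.2.1) * (x t.2.2 + y t.2.2)
              + x t.1 * x t.2.1 * x t.2.2 + y t.1 * y t.2.1 * y t.2.2))
          + ((∑ t ∈ Finset.univ.filter (fun t : Fin n × Fin n => t.1 < t.2),
              ((x t.1 + y t.1) * (x t.2 + y t.2) + x t.1 * x t.2
                + y t.1 * y t.2))
             + ∑ i, ((x i + y i) + x i + y i)) := by
            congr 1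
            · exact Finset.sum_congr rfl fun t _ => key3 _ _ _ _ _ _
            congr 1
            · exact Finset.sum_congr rfl fun t _ => key2 _ _ _ _
            · exact Finset.sum_congr rfl fun i _ => key1 _ _
      _ = _ := by
            simp only [Finset.sum_add_distrib]
            ring
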